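/- Let X ⊆ ℝ^n be a finite disjoint union of relative interiors of simplices with vertices in ℤ^n, i.e., X = Δ_1° ⊔ … ⊔ Δ_N° where each Δ_j is the convex hull of an affinely independent subset of ℤ^n and Δ_j° is its relative interior, let d be the maximal dimension of the Δ_j, and let p be a polynomial with p(k) = #(ℤ^n ∩ k·X) for all positive integers k. Then the f*-vector of p is nonnegative: writing p(k) = Σ_{i=0}^{d} f*_i · C(k−1, i), every f*_i is a nonnegative integer. -/

import Mathlib

open Finset Set
open scoped Pointwise


theorem intrinsic_eq_interior {E : Type*} [NormedAddCommGroup E] [NormedSpace ℝ E] {s : Set E}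
    (h : affineSpan ℝ s = ⊤) : intrinsicInterior ℝ s = interior s := by
  have hmem : ∀ x : E, x ∈ affineSpan ℝ s := by intro x; rw [h]; trivial
  let e : affineSpan ℝ s ≃ₜ E :=
    { toFun := Subtype.val
      invFun := fun x => ⟨x, hmem x⟩
      left_inv := fun x => rfl
      right_inv := fun x => rfl
      continuous_toFun := continuous_subtype_val
      continuous_invFun := Continuous.subtype_mk continuous_id _ }
  have : ((↑) : affineSpan ℝ s → E) = ⇑e := rfl
  rw [intrinsicInterior, this, ← Homeomorph.preimage_interior]
  exact Equiv.image_preimage e.toEquiv _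

theorem intrinsicInterior_simplex {E : Type*} [NormedAddCommGroup E] [NormedSpace ℝ E]
    {ι : Type*} [Fintype ι] [Nonempty ι] (v : ι → E) (hv : AffineIndependent ℝ v) :
    intrinsicInterior ℝ (convexHull ℝ (Set.range v)) =
      {x | ∃ lam : ι → ℝ, (∀ i, 0 < lam i) ∧ ∑ i, lam i = 1 ∧ ∑ i, lam i • v i = x} := by
  classical
  obtain ⟨i₀⟩ := (inferInstance : Nonempty ι)
  set D : Submodule ℝ E := Submodule.span ℝ (Set.range fun i => v i - v i₀) with hD
  have hmemD : ∀ i, v i - v i₀ ∈ D := fun i => Submodule.subset_span ⟨i, rfl⟩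
  set w : ι → D := fun i => ⟨v i - v i₀, hmemD i⟩ with hw
  let φ : D →ᵃⁱ[ℝ] E :=
    (AffineIsometryEquiv.constVAdd ℝ E (v i₀)).toAffineIsometry.comp D.subtypeₗᵢ.toAffineIsometry
  have hφ : ∀ y : D, φ y = v i₀ + (y : E) := fun y => rfl
  have hφw : ∀ i, φ (w i) = v i := by intro i; rw [hφ]; simp [hw]
  have hcomp : v = ⇑φ.toAffineMap ∘ w := by funext i; simp [hφw i]
  have hw_ind : AffineIndependent ℝ w := by
    apply AffineIndependent.of_comp (φ.toAffineMap)
    rw [← hcomp]; exact hv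
  have hw0 : w i₀ = 0 := by simp [hw]
  have h2 : Submodule.span ℝ (Set.range w) = ⊤ := by
    apply Submodule.map_injective_of_injective D.injective_subtype
    rw [Submodule.map_span, Submodule.map_top, Submodule.range_subtype]
    have himg : D.subtype '' Set.range w = Set.range fun i => v i - v i₀ := by
      ext x
      simp [hw]
    rw [himg, hD]
  have span_top : affineSpan ℝ (Set.range w) = ⊤ := by
    refine (AffineSubspace.affineSpan_eq_top_iff_vectorSpan_eq_top_of_nonempty ℝ _ _
      (Set.range_nonempty w)).mpr ?_
    have h1 : Submodule.span ℝ (Set.range w) ≤ vectorSpan ℝ (Set.range w) := by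
      rw [Submodule.span_le]
      rintro _ ⟨i, rfl⟩
      have hvs : w i -ᵥ w i₀ ∈ vectorSpan ℝ (Set.range w) :=
        vsub_mem_vectorSpan ℝ (Set.mem_range_self i) (Set.mem_range_self i₀)
      simpa [hw0] using hvs
    exact top_unique (h2 ▸ h1)
  let b : AffineBasis ι ℝ D := ⟨w, hw_ind, span_top⟩
  have hbcoe : ⇑b = w := rfl
  have hhull : convexHull ℝ (Set.range v) = ⇑φ '' (convexHull ℝ (Set.range w)) := by
    rw [← φ.coe_toAffineMap, AffineMap.image_convexHull]
    congr 1
    rw [← Set.range_comp, ← hcomp]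
  have hkey : interior (convexHull ℝ (Set.range w)) = {y : D | ∀ i, 0 < b.coord i y} := by
    rw [← hbcoe]; exact b.interior_convexHull
  have shift : ∀ lam : ι → ℝ, ∑ i, lam i = 1 →
      v i₀ + ∑ i, lam i • (v i - v i₀) = ∑ i, lam i • v i := by
    intro lam hsum
    simp only [smul_sub, Finset.sum_sub_distrib, ← Finset.sum_smul, hsum, one_smul]
    abel
  rw [hhull, AffineIsometry.image_intrinsicInterior,
    intrinsic_eq_interior (by rw [affineSpan_convexHull]; exact span_top), hkey]
  ext x
  constructor
  · rintro ⟨y, hy, rfl⟩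
    have hsum1 : ∑ i, b.coord i y = 1 := b.sum_coord_apply_eq_one y
    refine ⟨fun i => b.coord i y, hy, hsum1, ?_⟩
    have hyc : (Finset.univ.affineCombination ℝ b fun i => b.coord i y) = y :=
      b.affineCombination_coord_eq_self y
    rw [Finset.univ.affineCombination_eq_linear_combination _ _ hsum1] at hyc
    have hyc' : (y : E) = ∑ i, b.coord i y • (v i - v i₀) := by
      conv_lhs => rw [← hyc]
      push_cast [hbcoe, hw]
      rfl
    rw [hφ, hyc', shift _ hsum1]
  · rintro ⟨lam, hpos, hsum, hx⟩
    refine ⟨∑ i, lam i • w i, ?_, ?_⟩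
    · intro i
      have hc : (Finset.univ.affineCombination ℝ b lam) = ∑ i, lam i • w i := by
        rw [Finset.univ.affineCombination_eq_linear_combination _ _ hsum, hbcoe]
      rw [← hc, b.coord_apply_combination_of_mem (Finset.mem_univ i) hsum]
      exact hpos i
    · rw [hφ]
      have hco : ((∑ i, lam i • w i : D) : E) = ∑ i, lam i • (v i - v i₀) := by
        push_cast [hw]
        rfl
      rw [hco, shift _ hsum, hx]

theorem weights_unique {E : Type*} [NormedAddCommGroup E] [NormedSpace ℝ E]
    {ι : Type*} [Fintype ι] (v : ι → E) (hv : AffineIndependent ℝ v) {t : ℝ} (ht : t ≠ 0)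
    (lam lam' : ι → ℝ) (h1 : ∑ i, lam i = t) (h2 : ∑ i, lam' i = t)
    (heq : ∑ i, lam i • v i = ∑ i, lam' i • v i) : lam = lam' := by
  have hw1 : ∑ i, t⁻¹ * lam i = 1 := by rw [← Finset.mul_sum, h1, inv_mul_cancel₀ ht]
  have hw2 : ∑ i, t⁻¹ * lam' i = 1 := by rw [← Finset.mul_sum, h2, inv_mul_cancel₀ ht]
  have e1 := Finset.univ.affineCombination_eq_linear_combination v _ hw1
  have e2 := Finset.univ.affineCombination_eq_linear_combination v _ hw2
  have : Finset.univ.affineCombination ℝ v (fun i => t⁻¹ * lam i)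
      = Finset.univ.affineCombination ℝ v (fun i => t⁻¹ * lam' i) := by
    rw [e1, e2]
    simp only [mul_smul, ← Finset.smul_sum, heq]
  have := (affineIndependent_iff_eq_of_fintype_affineCombination_eq ℝ v).mp hv _ _ hw1 hw2 this
  funext i
  have hi := congrFun this i
  simpa using mul_left_cancel₀ (inv_ne_zero ht) hi

section SimplexCount
variable {n : ℕ} {ι : Type*} [Fintype ι] [Nonempty ι] [DecidableEq ι]

def Tset (V : ι → Fin n → ℤ) (k : ℕ) : Set (Fin n → ℤ) :=
  {x | ∃ lam : ι → ℝ, (∀ i, 0 < lam i) ∧ ∑ i, lam i = (k : ℝ) ∧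
    ∀ a, ∑ i, lam i * (V i a : ℝ) = (x a : ℝ)}

def Sset (V : ι → Fin n → ℤ) : Set ((Fin n → ℤ) × ℕ) :=
  {p | ∃ mu : ι → ℝ, (∀ i, 0 < mu i ∧ mu i ≤ 1) ∧ ∑ i, mu i = (p.2 : ℝ) ∧
    ∀ a, ∑ i, mu i * (V i a : ℝ) = (p.1 a : ℝ)}

theorem bound_aux (V : ι → Fin n → ℤ) (lam : ι → ℝ) (hpos : ∀ i, 0 ≤ lam i) (a : Fin n) :
    |∑ i, lam i * (V i a : ℝ)| ≤ (∑ i, lam i) * (∑ i, ∑ b, |(V i b : ℝ)|) := by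
  set C := ∑ i : ι, ∑ b, |(V i b : ℝ)| with hCdef
  have habs : ∀ (i : ι) (b : Fin n), (0:ℝ) ≤ |(V i b : ℝ)| := fun _ _ => abs_nonneg _
  have hC : ∀ i, |(V i a : ℝ)| ≤ C := by
    intro i
    calc |(V i a : ℝ)| ≤ ∑ b, |(V i b : ℝ)| :=
          Finset.single_le_sum (fun b _ => habs i b) (Finset.mem_univ a)
      _ ≤ C := Finset.single_le_sum
          (fun j (_ : j ∈ Finset.univ) => Finset.sum_nonneg fun b _ => habs j b)
          (Finset.mem_univ i)
  calc |∑ i, lam i * (V i a : ℝ)| ≤ ∑ i, |lam i * (V i a : ℝ)| :=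
        Finset.abs_sum_le_sum_abs _ _
    _ = ∑ i, lam i * |(V i a : ℝ)| := by
        apply Finset.sum_congr rfl; intro i _; rw [abs_mul, abs_of_nonneg (hpos i)]
    _ ≤ ∑ i, lam i * C := Finset.sum_le_sum fun i _ =>
        mul_le_mul_of_nonneg_left (hC i) (hpos i)
    _ = (∑ i, lam i) * C := (Finset.sum_mul _ _ _).symm

theorem lattice_finite' (B : ℝ) : {x : Fin n → ℤ | ∀ a, |(x a : ℝ)| ≤ B}.Finite := by
  apply Set.Finite.subset (Set.finite_Icc (fun _ : Fin n => -⌈B⌉) fun _ : Fin n => ⌈B⌉)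
  intro x hx
  constructor
  · intro a
    have h := hx a
    rw [abs_le] at h
    have : (-⌈B⌉ : ℝ) ≤ (x a : ℝ) := le_trans (by exact_mod_cast neg_le_neg (Int.le_ceil B)) h.1
    exact_mod_cast this
  · intro a
    have h := hx a
    rw [abs_le] at h
    have : (x a : ℝ) ≤ (⌈B⌉ : ℝ) := le_trans h.2 (Int.le_ceil B)
    exact_mod_cast this

theorem Tset_finite (V : ι → Fin n → ℤ) (k : ℕ) : (Tset V k).Finite := by
  apply Set.Finite.subset (lattice_finite' ((k : ℝ) * ∑ i : ι, ∑ b, |(V i b : ℝ)|))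
  rintro x ⟨lam, hpos, hsum, heq⟩ a
  rw [← heq a]
  have := bound_aux V lam (fun i => (hpos i).le) a
  rwa [hsum] at this

theorem Sset_finite (V : ι → Fin n → ℤ) : (Sset V).Finite := by
  apply Set.Finite.subset
    ((lattice_finite' ((Fintype.card ι : ℝ) * ∑ i : ι, ∑ b, |(V i b : ℝ)|)).prod
      (Set.finite_Iic (Fintype.card ι)))
  rintro ⟨u, r⟩ ⟨mu, hmu, hsum, heq⟩
  have hsum_le : ∑ i, mu i ≤ (Fintype.card ι : ℝ) := by
    calc ∑ i, mu i ≤ ∑ _i : ι, (1:ℝ) := Finset.sum_le_sum fun i _ => (hmu i).2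
      _ = (Fintype.card ι : ℝ) := by simp
  constructor
  · intro a
    rw [← heq a]
    have h1 := bound_aux V mu (fun i => (hmu i).1.le) a
    have hCnn : (0:ℝ) ≤ ∑ i : ι, ∑ b, |(V i b : ℝ)| :=
      Finset.sum_nonneg fun i _ => Finset.sum_nonneg fun b _ => abs_nonneg _
    exact h1.trans (mul_le_mul_of_nonneg_right hsum_le hCnn)
  · simp only [Set.mem_Iic]
    have : (r : ℝ) ≤ (Fintype.card ι : ℝ) := hsum ▸ hsum_le
    exact_mod_cast this

theorem Sset_r_bounds (V : ι → Fin n → ℤ) {p : (Fin n → ℤ) × ℕ} (hp : p ∈ Sset V) :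
    1 ≤ p.2 ∧ p.2 ≤ Fintype.card ι := by
  obtain ⟨mu, hmu, hsum, -⟩ := hp
  constructor
  · have hpos : (0:ℝ) < ∑ i, mu i :=
      Finset.sum_pos (fun i _ => (hmu i).1) Finset.univ_nonempty
    rw [hsum] at hpos
    exact_mod_cast Nat.one_le_iff_ne_zero.mpr (by exact_mod_cast hpos.ne')
  · have hle : ∑ i, mu i ≤ (Fintype.card ι : ℝ) := by
      calc ∑ i, mu i ≤ ∑ _i : ι, (1:ℝ) := Finset.sum_le_sum fun i _ => (hmu i).2
        _ = (Fintype.card ι : ℝ) := by simp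
    rw [hsum] at hle
    exact_mod_cast hle

theorem ceil_decomp_unique {x : ℝ} {c c' : ℕ} (h1 : 0 < x - c) (h2 : x - c ≤ 1)
    (h1' : 0 < x - c') (h2' : x - c' ≤ 1) : c = c' := by
  have a1 : (c : ℝ) < x := by linarith
  have a2 : x ≤ (c : ℝ) + 1 := by linarith
  have a1' : (c' : ℝ) < x := by linarith
  have a2' : x ≤ (c' : ℝ) + 1 := by linarith
  have b1 : (c : ℝ) < (c' : ℝ) + 1 := lt_of_lt_of_le a1 a2'
  have b2 : (c' : ℝ) < (c : ℝ) + 1 := lt_of_lt_of_le a1' a2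
  have b1' : c < c' + 1 := by exact_mod_cast b1
  have b2' : c' < c + 1 := by exact_mod_cast b2
  omega
end SimplexCount

section SimplexCount2
variable {n : ℕ} {ι : Type*} [Fintype ι] [Nonempty ι] [DecidableEq ι]

theorem card_piAntidiag_univ' (s : ℕ) :
    (Finset.piAntidiag (Finset.univ : Finset ι) s).card
      = (s + (Fintype.card ι - 1)).choose (Fintype.card ι - 1) := by
  have h1 : 1 ≤ Fintype.card ι := Fintype.card_pos
  rw [← Finset.map_sym_eq_piAntidiag, Finset.card_map, Finset.sym_univ, Finset.card_univ,
    Sym.card_sym_eq_choose]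
  have h2 : Fintype.card ι + s - 1 = s + (Fintype.card ι - 1) := by omega
  rw [h2]
  have h3 : s ≤ s + (Fintype.card ι - 1) := Nat.le_add_right _ _
  rw [← Nat.choose_symm h3]
  congr 1
  omega

theorem simplex_count (V : ι → Fin n → ℤ)
    (hv : AffineIndependent ℝ fun i => (fun a => (V i a : ℝ))) {k : ℕ} (hk : 1 ≤ k) :
    (Tset V k).ncard = ∑ p ∈ (Sset_finite V).toFinset,
      if p.2 ≤ k then (k - p.2 + (Fintype.card ι - 1)).choose (Fintype.card ι - 1) else 0 := by
  classical
  have hkR : (0:ℝ) < (k : ℝ) := by exact_mod_cast hk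
  set v : ι → Fin n → ℝ := fun i a => (V i a : ℝ) with hvdef
  have hcoordR : ∀ (lam : ι → ℝ) (a : Fin n), (∑ i, lam i • v i) a = ∑ i, lam i * (V i a : ℝ) := by
    intro lam a
    simp [hvdef, Finset.sum_apply]
  have huniq : ∀ lam lam' : ι → ℝ, ∑ i, lam i = (k:ℝ) → ∑ i, lam' i = (k:ℝ) →
      (∀ a, ∑ i, lam i * (V i a : ℝ) = ∑ i, lam' i * (V i a : ℝ)) → lam = lam' := by
    intro lam lam' h1 h2 heq
    apply weights_unique v hv hkR.ne' lam lam' h1 h2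
    funext a
    rw [hcoordR, hcoordR]
    exact heq a
  have hcoordZ : ∀ (c : ι → ℕ) (u : Fin n → ℤ) (a : Fin n),
      (((u + ∑ i, c i • V i) a : ℤ) : ℝ) = (u a : ℝ) + ∑ i, (c i : ℝ) * (V i a : ℝ) := by
    intro c u a
    simp only [Pi.add_apply, Finset.sum_apply, Pi.smul_apply, smul_eq_mul, nsmul_eq_mul,
      Pi.mul_apply, Pi.natCast_apply]
    push_cast
    ring
  have hTfin := Tset_finite V k
  have hSfin := Sset_finite V
  set SF := hSfin.toFinset with hSF
  set TF := hTfin.toFinset with hTF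
  rw [← Set.Finite.coe_toFinset hTfin, Set.ncard_coe_finset]
  have hcard : TF.card = (SF.sigma fun p =>
      if p.2 ≤ k then Finset.piAntidiag (Finset.univ : Finset ι) (k - p.2)
      else (∅ : Finset (ι → ℕ))).card := by
    symm
    apply Finset.card_bij (fun q _ => q.1.1 + ∑ i, q.2 i • V i)
    -- maps into TF
    · rintro ⟨⟨u, r⟩, c⟩ hq
      rw [Finset.mem_sigma] at hq
      obtain ⟨hq1, hq2⟩ := hq
      have hq2' : r ≤ k ∧ c ∈ Finset.piAntidiag (Finset.univ : Finset ι) (k - r) := by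
        by_cases h : r ≤ k
        · rw [if_pos h] at hq2; exact ⟨h, hq2⟩
        · rw [if_neg h] at hq2; exact absurd hq2 (Finset.notMem_empty _)
      obtain ⟨hrk, hcmem⟩ := hq2'
      have hcsum : ∑ i, c i = k - r := (Finset.mem_piAntidiag.mp hcmem).1
      rw [hSF, Set.Finite.mem_toFinset] at hq1
      obtain ⟨mu, hmu, hmusum, hmucoord⟩ := hq1
      rw [hTF, Set.Finite.mem_toFinset]
      refine ⟨fun i => mu i + (c i : ℝ), ?_, ?_, ?_⟩
      · intro i
        have := (hmu i).1
        positivity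
      · rw [Finset.sum_add_distrib, hmusum]
        have : ∑ i, ((c i : ℝ)) = ((∑ i, c i : ℕ) : ℝ) := by push_cast; rfl
        rw [this, hcsum]
        have : ((k - r : ℕ) : ℝ) = (k : ℝ) - (r : ℝ) := by
          push_cast [Nat.cast_sub hrk]; ring
        rw [this]; ring
      · intro a
        have expand : ∑ i, (mu i + (c i : ℝ)) * (V i a : ℝ)
            = (∑ i, mu i * (V i a : ℝ)) + ∑ i, (c i : ℝ) * (V i a : ℝ) := by
          rw [← Finset.sum_add_distrib]
          apply Finset.sum_congr rfl
          intro i _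
          ring
        rw [expand, hmucoord a, ← hcoordZ c u a]
    -- injective
    · rintro ⟨⟨u, r⟩, c⟩ hq ⟨⟨u', r'⟩, c'⟩ hq' heq
      rw [Finset.mem_sigma] at hq hq'
      obtain ⟨hq1, hq2⟩ := hq
      obtain ⟨hq1', hq2'⟩ := hq'
      have hsplit : ∀ (r0 : ℕ) (c0 : ι → ℕ), (c0 ∈ if r0 ≤ k
          then Finset.piAntidiag (Finset.univ : Finset ι) (k - r0)
          else (∅ : Finset (ι → ℕ))) → r0 ≤ k ∧ ∑ i, c0 i = k - r0 := by
        intro r0 c0 h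
        by_cases hr0 : r0 ≤ k
        · rw [if_pos hr0] at h; exact ⟨hr0, (Finset.mem_piAntidiag.mp h).1⟩
        · rw [if_neg hr0] at h; exact absurd h (Finset.notMem_empty _)
      obtain ⟨hrk, hcsum⟩ := hsplit r c hq2
      obtain ⟨hrk', hcsum'⟩ := hsplit r' c' hq2'
      rw [hSF, Set.Finite.mem_toFinset] at hq1 hq1'
      obtain ⟨mu, hmu, hmusum, hmucoord⟩ := hq1
      obtain ⟨mu', hmu', hmusum', hmucoord'⟩ := hq1'
      set lam : ι → ℝ := fun i => mu i + (c i : ℝ) with hlam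
      set lam' : ι → ℝ := fun i => mu' i + (c' i : ℝ) with hlam'
      have hsum : ∑ i, lam i = (k : ℝ) := by
        rw [hlam, Finset.sum_add_distrib, hmusum]
        have e1 : ∑ i, ((c i : ℝ)) = ((∑ i, c i : ℕ) : ℝ) := by push_cast; rfl
        rw [e1, hcsum]
        push_cast [Nat.cast_sub hrk]
        ring
      have hsum' : ∑ i, lam' i = (k : ℝ) := by
        rw [hlam', Finset.sum_add_distrib, hmusum']
        have e1 : ∑ i, ((c' i : ℝ)) = ((∑ i, c' i : ℕ) : ℝ) := by push_cast; rfl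
        rw [e1, hcsum']
        push_cast [Nat.cast_sub hrk']
        ring
      have hcoord : ∀ a, ∑ i, lam i * (V i a : ℝ) = ∑ i, lam' i * (V i a : ℝ) := by
        intro a
        have e1 : ∑ i, lam i * (V i a : ℝ)
            = (∑ i, mu i * (V i a : ℝ)) + ∑ i, (c i : ℝ) * (V i a : ℝ) := by
          rw [hlam, ← Finset.sum_add_distrib]; exact Finset.sum_congr rfl fun i _ => by ring
        have e2 : ∑ i, lam' i * (V i a : ℝ)
            = (∑ i, mu' i * (V i a : ℝ)) + ∑ i, (c' i : ℝ) * (V i a : ℝ) := by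
          rw [hlam', ← Finset.sum_add_distrib]; exact Finset.sum_congr rfl fun i _ => by ring
        rw [e1, e2, hmucoord a, hmucoord' a, ← hcoordZ c u a, ← hcoordZ c' u' a, heq]
      have hll : lam = lam' := huniq lam lam' hsum hsum' hcoord
      have hcc : c = c' := by
        funext i
        have h1 : lam i - (c i : ℝ) = mu i := by rw [hlam]; ring
        have h2 : lam i - (c' i : ℝ) = mu' i := by rw [hll, hlam']; ring
        exact ceil_decomp_unique (h1 ▸ (hmu i).1) (h1 ▸ (hmu i).2)
          (h2 ▸ (hmu' i).1) (h2 ▸ (hmu' i).2)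
      have hmm : mu = mu' := by
        funext i
        have h : mu i + (c i : ℝ) = mu' i + (c' i : ℝ) := congrFun hll i
        have hci := congrFun hcc i
        rw [hci] at h
        linarith
      have hrr : r = r' := by
        have : (r : ℝ) = (r' : ℝ) := by rw [← hmusum, ← hmusum', hmm]
        exact_mod_cast this
      have huu : u = u' := by
        funext a
        have : (u a : ℝ) = (u' a : ℝ) := by rw [← hmucoord a, ← hmucoord' a, hmm]
        exact_mod_cast this
      subst hrr huu hcc
      rfl
    -- surjective
    · intro x hx
      rw [hTF, Set.Finite.mem_toFinset] at hx
      obtain ⟨lam, hpos, hsum, hcoord⟩ := hx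
      set c : ι → ℕ := fun i => (⌈lam i⌉ - 1).toNat with hc
      have hcf : ∀ i, (c i : ℝ) = (⌈lam i⌉ : ℝ) - 1 := by
        intro i
        have h0 : (0:ℤ) ≤ ⌈lam i⌉ - 1 := by
          have : (0:ℤ) < ⌈lam i⌉ := Int.ceil_pos.mpr (hpos i)
          omega
        rw [hc]
        exact_mod_cast congrArg (fun z : ℤ => (z : ℝ)) (Int.toNat_of_nonneg h0)
      set mu : ι → ℝ := fun i => lam i - (c i : ℝ) with hmu
      have hmu_pos : ∀ i, 0 < mu i := by
        intro i
        rw [hmu]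
        simp only
        rw [hcf i]
        have := Int.ceil_lt_add_one (lam i)
        push_cast at this ⊢
        linarith
      have hmu_le : ∀ i, mu i ≤ 1 := by
        intro i
        rw [hmu]
        simp only
        rw [hcf i]
        have := Int.le_ceil (lam i)
        push_cast at this ⊢
        linarith
      have hcsum_lt : ∑ i, c i < k := by
        have hr : ((∑ i, c i : ℕ) : ℝ) < (k : ℝ) := by
          have e1 : ((∑ i, c i : ℕ) : ℝ) = ∑ i, ((c i : ℝ)) := by push_cast; rfl
          have e2 : ∑ i, ((c i : ℝ)) = (∑ i, lam i) - ∑ i, mu i := by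
            rw [← Finset.sum_sub_distrib]
            exact Finset.sum_congr rfl fun i _ => by rw [hmu]; ring
          have e3 : (0:ℝ) < ∑ i, mu i :=
            Finset.sum_pos (fun i _ => hmu_pos i) Finset.univ_nonempty
          rw [e1, e2, hsum]
          linarith
        exact_mod_cast hr
      set r : ℕ := k - ∑ i, c i with hr
      have hrk : r ≤ k := Nat.sub_le _ _
      have hrcast : (r : ℝ) = ∑ i, mu i := by
        have e1 : ((∑ i, c i : ℕ) : ℝ) = ∑ i, ((c i : ℝ)) := by push_cast; rfl
        have e2 : ∑ i, mu i = (∑ i, lam i) - ∑ i, ((c i : ℝ)) := by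
          rw [← Finset.sum_sub_distrib]
        have e3 : (r : ℝ) = (k : ℝ) - ((∑ i, c i : ℕ) : ℝ) := by
          rw [hr]
          push_cast [Nat.cast_sub hcsum_lt.le]
          ring
        rw [e3, e1, e2, hsum]
      set u : Fin n → ℤ := x - ∑ i, c i • V i with hu
      have himg : u + ∑ i, c i • V i = x := by rw [hu]; ring
      refine ⟨⟨(u, r), c⟩, ?_, himg⟩
      rw [Finset.mem_sigma]
      constructor
      · show (u, r) ∈ SF
        rw [hSF, Set.Finite.mem_toFinset]
        refine ⟨mu, fun i => ⟨hmu_pos i, hmu_le i⟩, hrcast.symm, ?_⟩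
        intro a
        have e2 : ∑ i, mu i * (V i a : ℝ)
            = (∑ i, lam i * (V i a : ℝ)) - ∑ i, (c i : ℝ) * (V i a : ℝ) := by
          rw [← Finset.sum_sub_distrib]
          exact Finset.sum_congr rfl fun i _ => by rw [hmu]; ring
        have e3 := hcoordZ c u a
        rw [himg] at e3
        rw [e2, hcoord a]
        linarith [e3]
      · show c ∈ (if r ≤ k then Finset.piAntidiag (Finset.univ : Finset ι) (k - r) else ∅)
        rw [if_pos hrk, Finset.mem_piAntidiag]
        exact ⟨(by omega : ∑ i, c i = k - r), fun i _ => Finset.mem_univ i⟩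
  rw [hcard, Finset.card_sigma]
  apply Finset.sum_congr rfl
  intro p hp
  by_cases hpk : p.2 ≤ k
  · rw [if_pos hpk, if_pos hpk, card_piAntidiag_univ']
  · rw [if_neg hpk, if_neg hpk, Finset.card_empty]
end SimplexCount2

-- Vandermonde rearrangement
theorem arith_vandermonde (m r k : ℕ) (hrm : r ≤ m + 1) (hk : 1 ≤ k) :
    (if r ≤ k then (k - r + m).choose m else 0)
      = ∑ i ∈ Finset.range (m + 1), (k - 1).choose i * (m + 1 - r).choose (m - i) := by
  by_cases h : r ≤ k
  · rw [if_pos h]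
    have hkr : k - r + m = (k - 1) + (m + 1 - r) := by omega
    rw [hkr, Nat.add_choose_eq]
    rw [Finset.Nat.sum_antidiagonal_eq_sum_range_succ_mk]
  · rw [if_neg h]
    symm
    apply Finset.sum_eq_zero
    intro i hi
    rw [Finset.mem_range] at hi
    rcases Nat.lt_or_ge (k - 1) i with hlt | hge
    · rw [Nat.choose_eq_zero_of_lt hlt, zero_mul]
    · have : m + 1 - r < m - i := by omega
      rw [Nat.choose_eq_zero_of_lt this, mul_zero]

section SimplexFormula
variable {n : ℕ} {ι : Type*} [Fintype ι] [Nonempty ι] [DecidableEq ι]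

theorem simplex_formula (V : ι → Fin n → ℤ)
    (hv : AffineIndependent ℝ fun i => (fun a => (V i a : ℝ))) :
    ∃ g : ℕ → ℕ, ∀ k : ℕ, 1 ≤ k →
      (Tset V k).ncard = ∑ i ∈ Finset.range (Fintype.card ι), (k - 1).choose i * g i := by
  classical
  set m := Fintype.card ι - 1 with hm
  have hm1 : m + 1 = Fintype.card ι := by
    have : 0 < Fintype.card ι := Fintype.card_pos
    omega
  refine ⟨fun i => ∑ p ∈ (Sset_finite V).toFinset,
    (Fintype.card ι - p.2).choose (m - i), ?_⟩
  intro k hk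
  rw [simplex_count V hv hk, ← hm1]
  calc (∑ p ∈ (Sset_finite V).toFinset, if p.2 ≤ k then (k - p.2 + m).choose m else 0)
      = ∑ p ∈ (Sset_finite V).toFinset, ∑ i ∈ Finset.range (m + 1),
          (k - 1).choose i * (m + 1 - p.2).choose (m - i) := by
        apply Finset.sum_congr rfl
        intro p hp
        have hb := Sset_r_bounds V ((Set.Finite.mem_toFinset _).mp hp)
        exact arith_vandermonde m p.2 k (by omega) hk
    _ = ∑ i ∈ Finset.range (m + 1), ∑ p ∈ (Sset_finite V).toFinset,
          (k - 1).choose i * (m + 1 - p.2).choose (m - i) := Finset.sum_comm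
    _ = ∑ i ∈ Finset.range (m + 1), (k - 1).choose i *
          ∑ p ∈ (Sset_finite V).toFinset, (m + 1 - p.2).choose (m - i) := by
        apply Finset.sum_congr rfl
        intro i _
        rw [Finset.mul_sum]

theorem Oset_eq_Tset (V : ι → Fin n → ℤ)
    (hv : AffineIndependent ℝ fun i => (fun a => (V i a : ℝ))) {k : ℕ} (hk : 1 ≤ k) :
    {x : Fin n → ℤ | (fun a => (x a : ℝ)) ∈ (k : ℝ) •
      intrinsicInterior ℝ (convexHull ℝ (Set.range fun i => (fun a => (V i a : ℝ))))}
      = Tset V k := by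
  have hk0 : (0:ℝ) < (k:ℝ) := by exact_mod_cast hk
  ext x
  rw [Set.mem_setOf_eq, mem_smul_set_iff_inv_smul_mem₀ hk0.ne' _ _,
    intrinsicInterior_simplex _ hv, Set.mem_setOf_eq]
  have hcoordR : ∀ (lam : ι → ℝ) (a : Fin n),
      (∑ i, lam i • (fun b => (V i b : ℝ))) a = ∑ i, lam i * (V i a : ℝ) := by
    intro lam a
    simp [Finset.sum_apply]
  constructor
  · rintro ⟨lam, hpos, hsum, hx⟩
    refine ⟨fun i => (k:ℝ) * lam i, fun i => by have := hpos i; positivity, ?_, ?_⟩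
    · rw [← Finset.mul_sum, hsum, mul_one]
    · intro a
      have h := congrFun hx a
      rw [hcoordR] at h
      have h2 : (((k:ℝ)⁻¹ • fun b => ((x b : ℝ))) a) = (k:ℝ)⁻¹ * (x a : ℝ) := rfl
      rw [h2] at h
      have : ∑ i, (k:ℝ) * lam i * (V i a : ℝ) = (k:ℝ) * ∑ i, lam i * (V i a : ℝ) := by
        rw [Finset.mul_sum]
        exact Finset.sum_congr rfl fun i _ => by ring
      rw [this, h]
      field_simp
  · rintro ⟨lam, hpos, hsum, hx⟩
    refine ⟨fun i => (k:ℝ)⁻¹ * lam i, fun i => by have := hpos i; positivity, ?_, ?_⟩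
    · rw [← Finset.mul_sum, hsum, inv_mul_cancel₀ hk0.ne']
    · funext a
      rw [hcoordR]
      have h2 : (((k:ℝ)⁻¹ • fun b => ((x b : ℝ))) a) = (k:ℝ)⁻¹ * (x a : ℝ) := rfl
      rw [h2, ← hx a, Finset.mul_sum]
      exact Finset.sum_congr rfl fun i _ => by ring

end SimplexFormula

theorem ncard_iUnion_eq {α : Type*} {N : ℕ} (A : Fin N → Set α)
    (hfin : ∀ j, (A j).Finite) (hdisj : Pairwise (Function.onFun Disjoint A)) :
    (⋃ j, A j).ncard = ∑ j, (A j).ncard := by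
  classical
  have hco : (⋃ j, A j) = ↑(Finset.univ.biUnion fun j => (hfin j).toFinset) := by
    rw [Finset.coe_biUnion]
    simp [Set.Finite.coe_toFinset]
  rw [hco, Set.ncard_coe_finset, Finset.card_biUnion]
  · exact Finset.sum_congr rfl fun j _ => by
      rw [← Set.ncard_coe_finset, Set.Finite.coe_toFinset]
  · intro a _ b _ hab
    rw [Function.onFun, Finset.disjoint_left]
    intro x hxa hxb
    exact Set.disjoint_left.mp (hdisj hab) ((hfin a).mem_toFinset.mp hxa)
      ((hfin b).mem_toFinset.mp hxb)

/-- Nonnegativity of the `f*`-vector -/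
theorem fstar_nonnegativity
    (n N : ℕ) (Δ : Fin N → Finset (Fin n → ℤ))
    (haff : ∀ j, AffineIndependent ℝ
      (fun q : {x // x ∈ Δ j} => (fun i => ((q : Fin n → ℤ) i : ℝ))))
    (O : Fin N → Set (Fin n → ℝ))
    (hO : ∀ j, O j =
      intrinsicInterior ℝ (convexHull ℝ ((fun y : Fin n → ℤ => fun i => (y i : ℝ)) '' ↑(Δ j))))
    (hdisj : Pairwise (Function.onFun Disjoint O))
    (X : Set (Fin n → ℝ)) (hX : X = ⋃ j, O j)
    (d : ℕ) (hd : d = Finset.univ.sup (fun j => (Δ j).card - 1))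
    (p : Polynomial ℚ)
    (hp : ∀ k : ℕ, 0 < k →
      p.eval (k : ℚ) =
        (Set.ncard {x : Fin n → ℤ | (fun i => (x i : ℝ)) ∈ (k : ℝ) • X} : ℚ)) :
    ∃ f : Fin (d + 1) → ℕ,
      ∀ k : ℕ, 0 < k →
        p.eval (k : ℚ) = ∑ i : Fin (d + 1), (f i : ℚ) * Nat.choose (k - 1) (i : ℕ) := by
  classical
  have key : ∀ j : Fin N, ∃ g : ℕ → ℕ, ∀ k : ℕ, 0 < k →
      ({x : Fin n → ℤ | (fun a => (x a : ℝ)) ∈ (k : ℝ) • O j}.Finite) ∧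
      ({x : Fin n → ℤ | (fun a => (x a : ℝ)) ∈ (k : ℝ) • O j}.ncard
        = ∑ i ∈ Finset.range (d + 1), (k - 1).choose i * g i) := by
    intro j
    rcases eq_or_ne (Δ j) ∅ with hje | hjne
    · refine ⟨fun _ => 0, fun k hk => ?_⟩
      have hOj : O j = ∅ := by rw [hO j, hje]; simp
      have hempty : {x : Fin n → ℤ | (fun a => (x a : ℝ)) ∈ (k : ℝ) • O j} = ∅ := by
        rw [hOj]
        simp [Set.smul_set_empty]
      rw [hempty]
      simp
    · have hne : (Δ j).Nonempty := Finset.nonempty_iff_ne_empty.mpr hjne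
      haveI : Nonempty {x // x ∈ Δ j} := ⟨⟨hne.choose, hne.choose_spec⟩⟩
      set V : {x // x ∈ Δ j} → (Fin n → ℤ) := fun q => (q : Fin n → ℤ) with hV
      have hvaff : AffineIndependent ℝ fun i => (fun a => ((V i a : ℤ) : ℝ)) := haff j
      have hOj : O j = intrinsicInterior ℝ (convexHull ℝ
          (Set.range fun i : {x // x ∈ Δ j} => (fun a => ((V i a : ℤ) : ℝ)))) := by
        rw [hO j]
        congr 2
        rw [Set.image_eq_range]
        rfl
      obtain ⟨g, hg⟩ := simplex_formula V hvaff
      have hcard : Fintype.card {x // x ∈ Δ j} = (Δ j).card := Fintype.card_coe _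
      have hle0 : (Δ j).card - 1 ≤ d :=
        hd ▸ Finset.le_sup (f := fun j => (Δ j).card - 1) (Finset.mem_univ j)
      have hle : (Δ j).card ≤ d + 1 := by
        have hpos : 0 < (Δ j).card := Finset.card_pos.mpr hne
        omega
      refine ⟨fun i => if i < (Δ j).card then g i else 0, fun k hk => ?_⟩
      have hk1 : 1 ≤ k := hk
      constructor
      · rw [hOj, Oset_eq_Tset V hvaff hk1]
        exact Tset_finite V k
      · rw [hOj, Oset_eq_Tset V hvaff hk1, hg k hk1, hcard]
        calc ∑ i ∈ Finset.range (Δ j).card, (k - 1).choose i * g i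
            = ∑ i ∈ Finset.range (Δ j).card,
                (k - 1).choose i * (if i < (Δ j).card then g i else 0) := by
              apply Finset.sum_congr rfl
              intro i hi
              rw [Finset.mem_range] at hi
              rw [if_pos hi]
          _ = ∑ i ∈ Finset.range (d + 1),
                (k - 1).choose i * (if i < (Δ j).card then g i else 0) := by
              apply Finset.sum_subset (Finset.range_subset_range.mpr hle)
              intro i _ hi
              rw [Finset.mem_range] at hi
              rw [if_neg (by omega), mul_zero]
  choose g hg using key
  refine ⟨fun i => ∑ j, g j (i : ℕ), ?_⟩
  intro k hk
  rw [hp k hk]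
  have hk0 : (0:ℝ) < (k:ℝ) := by exact_mod_cast hk
  have hsetsplit : {x : Fin n → ℤ | (fun a => (x a : ℝ)) ∈ (k : ℝ) • X}
      = ⋃ j, {x : Fin n → ℤ | (fun a => (x a : ℝ)) ∈ (k : ℝ) • O j} := by
    rw [hX, Set.smul_set_iUnion]
    ext x
    simp only [Set.mem_setOf_eq, Set.mem_iUnion]
  have hdisj' : Pairwise (Function.onFun Disjoint
      (fun j => {x : Fin n → ℤ | (fun a => (x a : ℝ)) ∈ (k : ℝ) • O j})) := by
    intro a b hab
    rw [Function.onFun]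
    rw [Set.disjoint_left]
    intro x hxa hxb
    rw [Set.mem_setOf_eq, mem_smul_set_iff_inv_smul_mem₀ hk0.ne' _ _] at hxa hxb
    exact Set.disjoint_left.mp (hdisj hab) hxa hxb
  have hnat : {x : Fin n → ℤ | (fun a => (x a : ℝ)) ∈ (k : ℝ) • X}.ncard
      = ∑ i ∈ Finset.range (d + 1), (k - 1).choose i * ∑ j, g j i := by
    rw [hsetsplit, ncard_iUnion_eq _ (fun j => (hg j k hk).1) hdisj']
    calc ∑ j, {x : Fin n → ℤ | (fun a => (x a : ℝ)) ∈ (k : ℝ) • O j}.ncard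
        = ∑ j, ∑ i ∈ Finset.range (d + 1), (k - 1).choose i * g j i :=
          Finset.sum_congr rfl fun j _ => (hg j k hk).2
      _ = ∑ i ∈ Finset.range (d + 1), ∑ j, (k - 1).choose i * g j i := Finset.sum_comm
      _ = ∑ i ∈ Finset.range (d + 1), (k - 1).choose i * ∑ j, g j i := by
          apply Finset.sum_congr rfl
          intro i _
          rw [Finset.mul_sum]
  rw [hnat]
  rw [← Fin.sum_univ_eq_sum_range (fun i => (k - 1).choose i * ∑ j, g j i) (d + 1)]
  push_cast
  apply Finset.sum_congr rfl
  intro i _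
  ring
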